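/- Let n₁ + 2n₂ + ⋯ + m·n_m = n−1 and n₀ = n − (n₁ + ⋯ + n_m). Then the number of unlabeled plane trees on n vertices having exactly nᵢ vertices of degree i for each 0 ≤ i ≤ m equals (1/n) · n!/(n₀!·n₁!⋯n_m!). -/

import Mathlib

/-- A (finite, unlabeled) plane tree: a root together with a linearly ordered
list of subtrees. -/
inductive PlaneTree : Type
  | node : List PlaneTree → PlaneTree

/-- The number of vertices of a plane tree. -/
def PlaneTree.size : PlaneTree → ℕ
  | .node ts => 1 + (ts.attach.map fun t => PlaneTree.size t.1).sum
decreasing_by have := List.sizeOf_lt_of_mem t.2; simp at this ⊢; omega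

/-- The number of vertices of a plane tree having exactly `i` children. -/
def PlaneTree.degCount (i : ℕ) : PlaneTree → ℕ
  | .node ts => (if ts.length = i then 1 else 0) +
      (ts.attach.map fun t => PlaneTree.degCount i t.1).sum
decreasing_by have := List.sizeOf_lt_of_mem t.2; simp at this ⊢; omega

/-! ### Łukasiewicz words -/

/-- `Bal c w` : the word `w` is a sequence of degrees whose Łukasiewicz path
(steps `x - 1`) ends at `-c` and stays `> -c` strictly before the end. -/
def Bal (c : ℕ) (w : List ℕ) : Prop :=
  w.sum + c = w.length ∧ ∀ k < w.length, k < (w.take k).sum + c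

lemma sum_take_add (v : List ℕ) (k d : ℕ) :
    (v.take (k + d)).sum = (v.take k).sum + ((v.drop k).take d).sum := by
  rw [List.take_add, List.sum_append]

lemma sum_take_mono (v : List ℕ) {k k' : ℕ} (h : k ≤ k') :
    (v.take k).sum ≤ (v.take k').sum := by
  obtain ⟨d, rfl⟩ := Nat.exists_eq_add_of_le h
  rw [sum_take_add]; omega

lemma bal_zero {w : List ℕ} (h : Bal 0 w) : w = [] := by
  rcases w with _ | ⟨x, v⟩
  · rfl
  · exact absurd (h.2 0 (by simp)) (by simp)

lemma bal_cons {c x : ℕ} {v : List ℕ} : Bal (c + 1) (x :: v) ↔ Bal (c + x) v := by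
  constructor
  · rintro ⟨h1, h2⟩
    refine ⟨by simp at h1; omega, fun k hk => ?_⟩
    have := h2 (k + 1) (by simp only [List.length_cons]; omega)
    simp only [List.take_succ_cons, List.sum_cons] at this
    omega
  · rintro ⟨h1, h2⟩
    refine ⟨by simp; omega, fun k hk => ?_⟩
    cases k with
    | zero => simp only [List.take_zero, List.sum_nil]; omega
    | succ k =>
      have := h2 k (by simp only [List.length_cons] at hk; omega)
      simp only [List.take_succ_cons, List.sum_cons]
      omega

lemma bal_append {c d : ℕ} {v w : List ℕ} (h1 : Bal c v) (h2 : Bal d w) :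
    Bal (c + d) (v ++ w) := by
  rcases Nat.eq_zero_or_pos d with rfl | hd
  · rw [bal_zero h2]; simpa using h1
  obtain ⟨h1s, h1p⟩ := h1
  obtain ⟨h2s, h2p⟩ := h2
  constructor
  · simp [List.sum_append]; omega
  · intro k hk
    rw [List.take_append, List.sum_append]
    rcases lt_or_ge k v.length with h | h
    · have := h1p k h
      have hz : k - v.length = 0 := by omega
      rw [hz]; simp; omega
    · have hk' : k - v.length < w.length := by simp at hk; omega
      have hh := h2p _ hk'
      rw [List.take_of_length_le h]
      omega

lemma bal_flatten : ∀ {ws : List (List ℕ)}, (∀ w ∈ ws, Bal 1 w) →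
    Bal ws.length ws.flatten := by
  intro ws
  induction ws with
  | nil => intro _; exact ⟨by simp, by simp⟩
  | cons w ws ih =>
    intro h
    have := bal_append (h w (by simp)) (ih fun u hu => h u (by simp [hu]))
    simpa [Nat.add_comm] using this

lemma bal_one_ne_nil {w : List ℕ} (h : Bal 1 w) : w ≠ [] := by
  intro hw; subst hw; have := h.1; simp at this

lemma exists_stop {c : ℕ} {v : List ℕ} (h : Bal (c + 1) v) :
    ∃ t, t ≤ v.length ∧ (v.take t).sum + 1 = t := by
  by_contra hc
  push_neg at hc
  have key : ∀ t, t ≤ v.length → t ≤ (v.take t).sum := by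
    intro t
    induction t with
    | zero => simp
    | succ t ih =>
      intro ht
      have h1 := ih (by omega)
      have h2 := hc (t + 1) ht
      have h3 : (v.take t).sum ≤ (v.take (t + 1)).sum := sum_take_mono v (by omega)
      omega
  have := key v.length le_rfl
  rw [List.take_length] at this
  have := h.1
  omega

lemma bal_split {c : ℕ} {v : List ℕ} (h : Bal (c + 1) v) :
    ∃ x y, v = x ++ y ∧ x ≠ [] ∧ Bal 1 x ∧ Bal c y := by
  classical
  have hex := exists_stop h
  obtain ⟨t, ⟨htle, htsum⟩, hmin⟩ :
      ∃ t, (t ≤ v.length ∧ (v.take t).sum + 1 = t) ∧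
        ∀ k < t, ¬(k ≤ v.length ∧ (v.take k).sum + 1 = k) :=
    ⟨Nat.find hex, Nat.find_spec hex, fun k hk => Nat.find_min hex hk⟩
  have ht1 : 1 ≤ t := by
    rcases Nat.eq_zero_or_pos t with h0 | h0
    · exfalso; rw [h0] at htsum; simp at htsum
    · exact h0
  have hbelow : ∀ k, k < t → k ≤ (v.take k).sum := by
    intro k
    induction k with
    | zero => simp
    | succ k ih =>
      intro hk
      have h1 := ih (by omega)
      have h2 := hmin (k + 1) hk
      have h3 : (v.take k).sum ≤ (v.take (k + 1)).sum := sum_take_mono v (by omega)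
      have h4 : k + 1 ≤ v.length := by omega
      omega
  refine ⟨v.take t, v.drop t, (List.take_append_drop t v).symm, ?_, ⟨?_, ?_⟩, ⟨?_, ?_⟩⟩
  · intro hnil
    have h0 : (v.take t).length = 0 := by rw [hnil]; rfl
    rw [List.length_take] at h0
    omega
  · simp [List.length_take]; omega
  · intro k hk
    simp only [List.length_take, lt_min_iff] at hk
    rw [List.take_take, min_eq_left (by omega : k ≤ t)]
    have := hbelow k (by omega)
    omega
  · have hs : (v.take t).sum + (v.drop t).sum = v.sum := by
      rw [← List.sum_append, List.take_append_drop]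
    have := h.1
    simp only [List.length_drop]
    omega
  · intro k hk
    simp only [List.length_drop] at hk
    have := h.2 (t + k) (by omega)
    rw [sum_take_add] at this
    omega

lemma bal_one_eq_of_append_eq {u u' z z' : List ℕ} (hu : Bal 1 u) (hu' : Bal 1 u')
    (h : u ++ z = u' ++ z') : u = u' := by
  wlog hle : u.length ≤ u'.length with H
  · exact (H hu' hu h.symm (by omega)).symm
  have htake : u = u'.take u.length := by
    have h2 := congrArg (List.take u.length) h
    rw [List.take_append, List.take_append] at h2
    rw [List.take_length, Nat.sub_self, Nat.sub_eq_zero_of_le hle] at h2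
    simpa using h2
  rcases eq_or_lt_of_le hle with heq | hlt
  · rw [htake, heq, List.take_length]
  · exfalso
    have h3 := hu'.2 u.length hlt
    rw [← htake] at h3
    have := hu.1
    omega

lemma bal_flatten_unique : ∀ ws ws' : List (List ℕ), (∀ w ∈ ws, Bal 1 w) →
    (∀ w ∈ ws', Bal 1 w) → ws.flatten = ws'.flatten → ws = ws' := by
  intro ws
  induction ws with
  | nil =>
    intro ws' _ h' hf
    cases ws' with
    | nil => rfl
    | cons w ws' =>
      exfalso
      simp only [List.flatten_nil, List.flatten_cons] at hf
      exact bal_one_ne_nil (h' w (by simp)) (List.append_eq_nil_iff.mp hf.symm).1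
  | cons w ws ih =>
    intro ws' h h' hf
    cases ws' with
    | nil =>
      exfalso
      simp only [List.flatten_cons, List.flatten_nil] at hf
      exact bal_one_ne_nil (h w (by simp)) (List.append_eq_nil_iff.mp hf).1
    | cons w' ws'' =>
      simp only [List.flatten_cons] at hf
      have hw : w = w' := bal_one_eq_of_append_eq (h w (by simp)) (h' w' (by simp)) hf
      subst hw
      have hfl : ws.flatten = ws''.flatten := List.append_cancel_left hf
      rw [ih ws'' (fun u hu => h u (by simp [hu])) (fun u hu => h' u (by simp [hu])) hfl]

/-! ### Encoding of plane trees -/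

theorem PlaneTree.ind {P : PlaneTree → Prop}
    (h : ∀ ts : List PlaneTree, (∀ t ∈ ts, P t) → P (.node ts)) : ∀ t, P t
  | .node ts => h ts fun t ht => PlaneTree.ind h t
decreasing_by have := List.sizeOf_lt_of_mem ht; simp at this ⊢; omega

/-- The Łukasiewicz code of a plane tree: preorder list of degrees. -/
def PlaneTree.code : PlaneTree → List ℕ
  | .node ts => ts.length :: (ts.attach.map fun t => PlaneTree.code t.1).flatten
decreasing_by have := List.sizeOf_lt_of_mem t.2; simp at this ⊢; omega

lemma code_node (ts : List PlaneTree) :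
    (PlaneTree.node ts).code = ts.length :: (ts.map PlaneTree.code).flatten := by
  rw [PlaneTree.code, List.attach_map_val]

lemma size_node (ts : List PlaneTree) :
    (PlaneTree.node ts).size = 1 + (ts.map PlaneTree.size).sum := by
  rw [PlaneTree.size, List.attach_map_val]

lemma degCount_node (i : ℕ) (ts : List PlaneTree) :
    (PlaneTree.node ts).degCount i
      = (if ts.length = i then 1 else 0) + (ts.map (PlaneTree.degCount i)).sum := by
  rw [PlaneTree.degCount, List.attach_map_val]

lemma code_length : ∀ t : PlaneTree, t.code.length = t.size := by
  refine PlaneTree.ind fun ts ih => ?_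
  rw [code_node, size_node]
  have : (ts.map PlaneTree.code).map List.length = ts.map PlaneTree.size := by
    rw [List.map_map]
    exact List.map_congr_left fun t ht => ih t ht
  simp [List.length_flatten, this]
  omega

lemma count_flatten (i : ℕ) : ∀ L : List (List ℕ),
    L.flatten.count i = (L.map (fun l => l.count i)).sum := by
  intro L
  induction L with
  | nil => simp
  | cons l L ih => simp [List.count_append, ih]

lemma code_count (i : ℕ) : ∀ t : PlaneTree, t.code.count i = t.degCount i := by
  refine PlaneTree.ind fun ts ih => ?_
  rw [code_node, degCount_node, List.count_cons, count_flatten]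
  have : (ts.map PlaneTree.code).map (fun l => l.count i) = ts.map (PlaneTree.degCount i) := by
    rw [List.map_map]
    exact List.map_congr_left fun t ht => ih t ht
  rw [this]
  rcases eq_or_ne ts.length i with h | h <;> simp [h] <;> omega

lemma code_bal : ∀ t : PlaneTree, Bal 1 t.code := by
  refine PlaneTree.ind fun ts ih => ?_
  rw [code_node]
  have h := bal_flatten (ws := ts.map PlaneTree.code)
    (by intro w hw; obtain ⟨t, ht, rfl⟩ := List.mem_map.mp hw; exact ih t ht)
  rw [List.length_map] at h
  exact bal_cons.mpr (by simpa using h)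

lemma bal_decode : ∀ N c (v : List ℕ), v.length ≤ N → Bal c v →
    ∃ ts : List PlaneTree, ts.length = c ∧ (ts.map PlaneTree.code).flatten = v := by
  intro N
  induction N with
  | zero =>
    intro c v hv hb
    have hv0 : v = [] := List.eq_nil_of_length_eq_zero (by omega)
    subst hv0
    have : c = 0 := by have := hb.1; simpa using this
    subst this
    exact ⟨[], rfl, rfl⟩
  | succ N ih =>
    intro c v hv hb
    cases c with
    | zero =>
      rw [bal_zero hb]
      exact ⟨[], rfl, rfl⟩
    | succ c =>
      obtain ⟨x, y, rfl, hxne, hx1, hyc⟩ := bal_split hb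
      obtain ⟨x0, x', rfl⟩ : ∃ a l, x = a :: l := by
        cases x with
        | nil => exact absurd rfl hxne
        | cons a l => exact ⟨a, l, rfl⟩
      have hx' : Bal x0 x' := by simpa using bal_cons.mp hx1
      have hlx : x'.length ≤ N := by simp [List.length_append] at hv; omega
      obtain ⟨ts0, hts0len, hts0⟩ := ih x0 x' hlx hx'
      have hly : y.length ≤ N := by simp [List.length_append] at hv; omega
      obtain ⟨ts1, hts1len, hts1⟩ := ih c y hly hyc
      refine ⟨PlaneTree.node ts0 :: ts1, by simp [hts1len], ?_⟩
      simp only [List.map_cons, List.flatten_cons, code_node, hts0len, hts0, hts1,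
        List.cons_append]

lemma map_code_inj : ∀ ts ts' : List PlaneTree,
    (∀ t ∈ ts, ∀ t', t.code = t'.code → t = t') →
    ts.map PlaneTree.code = ts'.map PlaneTree.code → ts = ts' := by
  intro ts
  induction ts with
  | nil => intro ts' _ h; cases ts' <;> simp_all
  | cons t ts ih =>
    intro ts' hih h
    cases ts' with
    | nil => simp at h
    | cons t' ts'' =>
      simp only [List.map_cons, List.cons.injEq] at h
      rw [hih t (by simp) t' h.1, ih ts'' (fun u hu => hih u (by simp [hu])) h.2]

lemma code_inj : ∀ t : PlaneTree, ∀ t', t.code = t'.code → t = t' := by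
  refine PlaneTree.ind fun ts ih => ?_
  rintro ⟨ts'⟩ h
  rw [code_node, code_node] at h
  injection h with h1 h2
  have hmaps : ts.map PlaneTree.code = ts'.map PlaneTree.code :=
    bal_flatten_unique _ _
      (by intro w hw; obtain ⟨t, _, rfl⟩ := List.mem_map.mp hw; exact code_bal t)
      (by intro w hw; obtain ⟨t, _, rfl⟩ := List.mem_map.mp hw; exact code_bal t) h2
  rw [map_code_inj ts ts' ih hmaps]

/-! ### The cycle lemma -/

lemma rotate_bal_unique {w : List ℕ} (hw : Bal 1 w) {j : ℕ} (hj : j < w.length)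
    (hr : Bal 1 (w.rotate j)) : j = 0 := by
  by_contra h0
  have hj1 : 1 ≤ j := by omega
  have hrot : w.rotate j = w.drop j ++ w.take j := List.rotate_eq_drop_append_take hj.le
  have hk := hr.2 (w.length - j) (by rw [List.length_rotate]; omega)
  rw [hrot, List.take_append] at hk
  rw [List.take_of_length_le (by simp [List.length_drop])] at hk
  have hz : w.length - j - (w.drop j).length = 0 := by simp [List.length_drop]
  rw [hz] at hk
  simp only [List.take_zero, List.sum_nil, List.sum_append] at hk
  have hsum : (w.take j).sum + (w.drop j).sum = w.sum := by
    rw [← List.sum_append, List.take_append_drop]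
  have h2 := hw.2 j hj
  have h1 := hw.1
  omega

lemma exists_bal_rotate {w : List ℕ} (hw : w.sum + 1 = w.length) :
    ∃ j < w.length, Bal 1 (w.rotate j) := by
  classical
  set n := w.length with hn
  have hn1 : 1 ≤ n := by omega
  let g : ℕ → ℕ := fun k => (w.take k).sum + (n - k)
  have hex : ∃ j, (1 ≤ j ∧ j ≤ n) ∧ ∀ i, 1 ≤ i → i ≤ n → g j ≤ g i := by
    obtain ⟨j, hj, hmin⟩ := Finset.exists_min_image (Finset.Icc 1 n) g ⟨1, by simp [hn1]⟩
    rw [Finset.mem_Icc] at hj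
    exact ⟨j, hj, fun i h1 h2 => hmin i (Finset.mem_Icc.mpr ⟨h1, h2⟩)⟩
  obtain ⟨j, ⟨⟨hj1, hjn⟩, hjmin⟩, hjlow⟩ :
      ∃ j, ((1 ≤ j ∧ j ≤ n) ∧ ∀ i, 1 ≤ i → i ≤ n → g j ≤ g i) ∧
        ∀ k < j, ¬((1 ≤ k ∧ k ≤ n) ∧ ∀ i, 1 ≤ i → i ≤ n → g k ≤ g i) :=
    ⟨Nat.find hex, Nat.find_spec hex, fun k hk => Nat.find_min hex hk⟩
  have hfirst : ∀ k, 1 ≤ k → k < j → g j < g k := by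
    intro k h1 hk
    have hnm := hjlow k hk
    push_neg at hnm
    obtain ⟨i, hi1, hi2, hgi⟩ := hnm ⟨h1, by omega⟩
    have := hjmin i hi1 hi2
    omega
  have hbal : Bal 1 (w.rotate j) := by
    constructor
    · rw [(w.rotate_perm j).sum_eq, List.length_rotate]; exact hw
    · intro k hk
      rw [List.length_rotate] at hk
      rw [List.rotate_eq_drop_append_take hjn, List.take_append,
        List.sum_append]
      have hsum : (w.take j).sum + (w.drop j).sum = w.sum := by
        rw [← List.sum_append, List.take_append_drop]
      rcases le_or_gt k (n - j) with hkle | hkgt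
      · have hz : k - (w.drop j).length = 0 := by simp [List.length_drop]; omega
        rw [hz]
        simp only [List.take_zero, List.sum_nil]
        rcases Nat.eq_zero_or_pos k with rfl | hk0
        · omega
        · have hmin' := hjmin (j + k) (by omega) (by omega)
          have hadd := sum_take_add w j k
          simp only [g] at hmin'
          omega
      · rw [List.take_of_length_le (by simp [List.length_drop]; omega)]
        set k' := k - (w.drop j).length with hk'def
        have hk'eq : k' = k - (n - j) := by simp [hk'def, List.length_drop]; omega
        have hk'1 : 1 ≤ k' := by omega
        have hk'j : k' < j := by omega
        have hf := hfirst k' hk'1 hk'j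
        rw [List.take_take, min_eq_left (by omega : k' ≤ j)]
        simp only [g] at hf
        omega
  refine ⟨j % n, Nat.mod_lt _ (by omega), ?_⟩
  have heq : w.rotate (j % n) = w.rotate j := by
    rw [hn]
    exact List.rotate_mod w j
  rwa [heq]

/-! ### Counting lists with a given multiset -/

noncomputable instance fintypeCoeMultiset {α : Type*} [DecidableEq α] (s : Multiset α) :
    Fintype {l : List α // (l : Multiset α) = s} :=
  Fintype.subtype s.toList.permutations.toFinset (by
    intro l
    simp only [List.mem_toFinset, List.mem_permutations]
    rw [← Multiset.coe_eq_coe, Multiset.coe_toList])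

def consEquiv {α : Type*} [DecidableEq α] (s : Multiset α) (hs : s ≠ 0) :
    {l : List α // (l : Multiset α) = s} ≃
      Σ x : {x : α // x ∈ s.toFinset}, {l : List α // (l : Multiset α) = s.erase x.1} where
  toFun l :=
    have hne : l.1 ≠ [] := by
      intro h
      apply hs
      rw [← l.2, h, Multiset.coe_nil]
    ⟨⟨l.1.head hne, by
        rw [Multiset.mem_toFinset]
        have := Multiset.mem_coe.mpr (List.head_mem hne)
        rwa [l.2] at this⟩,
     ⟨l.1.tail, by
        have h2 : (l.1.head hne ::ₘ (l.1.tail : Multiset α)) = s := by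
          rw [Multiset.cons_coe, List.cons_head_tail]
          exact l.2
        have h3 : (l.1.tail : Multiset α)
            = (l.1.head hne ::ₘ (l.1.tail : Multiset α)).erase (l.1.head hne) :=
          (Multiset.erase_cons_head _ _).symm
        rw [h2] at h3
        exact h3⟩⟩
  invFun p := ⟨p.1.1 :: p.2.1, by
      rw [← Multiset.cons_coe, p.2.2]
      exact Multiset.cons_erase (Multiset.mem_toFinset.mp p.1.2)⟩
  left_inv l := Subtype.ext (List.cons_head_tail _)
  right_inv p := rfl

lemma prod_count_erase {α : Type*} [DecidableEq α] (s : Multiset α) {x : α} (hx : x ∈ s) :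
    s.count x * ∏ y ∈ (s.erase x).toFinset, ((s.erase x).count y).factorial
      = ∏ y ∈ s.toFinset, (s.count y).factorial := by
  have hsub : (s.erase x).toFinset ⊆ s.toFinset :=
    Multiset.toFinset_subset.mpr (Multiset.subset_of_le (Multiset.erase_le x s))
  have hext : ∏ y ∈ (s.erase x).toFinset, ((s.erase x).count y).factorial
      = ∏ y ∈ s.toFinset, ((s.erase x).count y).factorial := by
    refine Finset.prod_subset hsub ?_
    intro y _ hny
    rw [Multiset.count_eq_zero_of_notMem (by simpa [Multiset.mem_toFinset] using hny)]
    rfl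
  rw [hext]
  have hxmem : x ∈ s.toFinset := Multiset.mem_toFinset.mpr hx
  rw [← Finset.mul_prod_erase _ _ hxmem, ← Finset.mul_prod_erase _ (fun y => (s.count y).factorial) hxmem]
  rw [Multiset.count_erase_self]
  have h1 : ∏ y ∈ s.toFinset.erase x, ((s.erase x).count y).factorial
      = ∏ y ∈ s.toFinset.erase x, (s.count y).factorial := by
    refine Finset.prod_congr rfl fun y hy => ?_
    rw [Multiset.count_erase_of_ne (Finset.ne_of_mem_erase hy)]
  rw [h1, ← mul_assoc, Nat.mul_factorial_pred (Multiset.count_pos.mpr hx).ne']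

lemma card_coe_multiset {α : Type*} [DecidableEq α] (s : Multiset α) :
    Fintype.card {l : List α // (l : Multiset α) = s}
      * ∏ x ∈ s.toFinset, (s.count x).factorial = (Multiset.card s).factorial := by
  induction s using Multiset.strongInductionOn with
  | ih s ih =>
  rcases eq_or_ne s 0 with rfl | hs
  · rw [Fintype.card_congr (Equiv.subtypeEquivRight fun l => Multiset.coe_eq_zero l),
      Fintype.card_subtype_eq]
    simp
  · have hcard := Fintype.card_congr (consEquiv s hs)
    rw [Fintype.card_sigma] at hcard
    have hcard2 : Fintype.card {l : List α // (l : Multiset α) = s}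
        = ∑ x ∈ s.toFinset, Fintype.card {l : List α // (l : Multiset α) = s.erase x} := by
      rw [hcard]
      exact Finset.sum_coe_sort s.toFinset fun x => Fintype.card {l : List α // (l : Multiset α) = s.erase x}
    rw [hcard2, Finset.sum_mul]
    have hterm : ∀ x ∈ s.toFinset,
        Fintype.card {l : List α // (l : Multiset α) = s.erase x}
          * ∏ y ∈ s.toFinset, (s.count y).factorial
          = s.count x * (Multiset.card s - 1).factorial := by
      intro x hx
      have hxs : x ∈ s := Multiset.mem_toFinset.mp hx
      rw [← prod_count_erase s hxs]
      have hih := ih (s.erase x) (Multiset.erase_lt.mpr hxs)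
      rw [Multiset.card_erase_of_mem hxs] at hih
      calc Fintype.card {l : List α // (l : Multiset α) = s.erase x}
            * (s.count x * ∏ y ∈ (s.erase x).toFinset, ((s.erase x).count y).factorial)
          = s.count x * (Fintype.card {l : List α // (l : Multiset α) = s.erase x}
            * ∏ y ∈ (s.erase x).toFinset, ((s.erase x).count y).factorial) := by ring
        _ = s.count x * (Multiset.card s - 1).factorial := by
            rw [hih]; rfl
    rw [Finset.sum_congr rfl hterm, ← Finset.sum_mul, Multiset.toFinset_sum_count_eq]
    have hpos : 0 < Multiset.card s := by
      rwa [Multiset.card_pos]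
    rw [← Nat.succ_pred_eq_of_pos hpos]
    rw [Nat.factorial_succ]
    simp [Nat.pred_eq_sub_one]

/-! ### Main theorem -/

lemma multiset_card_finsum (t : Finset ℕ) (f : ℕ → Multiset ℕ) :
    Multiset.card (∑ i ∈ t, f i) = ∑ i ∈ t, Multiset.card (f i) := by
  induction t using Finset.cons_induction with
  | empty => simp
  | cons a t ha ih => simp [Finset.sum_cons, ih]

lemma multiset_sum_finsum (t : Finset ℕ) (f : ℕ → Multiset ℕ) :
    (∑ i ∈ t, f i).sum = ∑ i ∈ t, (f i).sum := by
  induction t using Finset.cons_induction with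
  | empty => simp
  | cons a t ha ih => rw [Finset.sum_cons, Finset.sum_cons, Multiset.sum_add, ih]

theorem card_unlabeled_plane_trees_degree_partition (n m : ℕ) (hn : 1 ≤ n)
    (a : ℕ → ℕ) (hpart : ∑ i ∈ Finset.Icc 1 m, i * a i = n - 1)
    (ha0 : a 0 = n - ∑ i ∈ Finset.Icc 1 m, a i)
    (hle : ∑ i ∈ Finset.Icc 1 m, a i ≤ n) :
    (Nat.card {t : PlaneTree // t.size = n ∧ ∀ i ≤ m, t.degCount i = a i} : ℚ) =
      (1 / n) * (n.factorial / ∏ i ∈ Finset.range (m + 1), (a i).factorial) := by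
  classical
  set s : Multiset ℕ := ∑ i ∈ Finset.range (m + 1), Multiset.replicate (a i) i with hs
  have hcount : ∀ j, s.count j = if j ≤ m then a j else 0 := by
    intro j
    rw [hs, Multiset.count_sum']
    rcases le_or_gt j m with hj | hj
    · rw [Finset.sum_eq_single j]
      · simp [Multiset.count_replicate, hj]
      · intro i hi hne
        simp only [Multiset.count_replicate]
        rw [if_neg (by omega)]
      · intro hmem
        exact absurd (Finset.mem_range.mpr (by omega)) hmem
    · rw [if_neg (by omega), Finset.sum_eq_zero]
      intro i hi
      rw [Finset.mem_range] at hi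
      simp [Multiset.count_replicate]
      omega
  have hins : Finset.range (m + 1) = insert 0 (Finset.Icc 1 m) := by
    ext x; simp [Finset.mem_Icc, Finset.mem_range]; omega
  have hsigma : ∑ i ∈ Finset.range (m + 1), a i = n := by
    rw [hins, Finset.sum_insert (by simp [Finset.mem_Icc])]
    omega
  have hcards : Multiset.card s = n := by
    rw [hs, multiset_card_finsum]
    simp only [Multiset.card_replicate]
    exact hsigma
  have hsums : s.sum = n - 1 := by
    rw [hs, multiset_sum_finsum]
    have : ∀ i ∈ Finset.range (m + 1), (Multiset.replicate (a i) i).sum = i * a i := by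
      intro i _
      rw [Multiset.sum_replicate, smul_eq_mul, Nat.mul_comm]
    rw [Finset.sum_congr rfl this, hins, Finset.sum_insert (by simp [Finset.mem_Icc])]
    simpa using hpart
  have key : ∀ t : PlaneTree,
      (t.size = n ∧ ∀ i ≤ m, t.degCount i = a i) ↔ (t.code : Multiset ℕ) = s := by
    intro t
    constructor
    · rintro ⟨hsize, hdeg⟩
      have h1 : s ≤ (t.code : Multiset ℕ) := by
        rw [Multiset.le_iff_count]
        intro i
        rw [hcount i, Multiset.coe_count, code_count i t]
        split_ifs with h
        · rw [hdeg i h]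
        · omega
      have h2 : Multiset.card (t.code : Multiset ℕ) ≤ Multiset.card s := by
        rw [Multiset.coe_card, code_length, hsize, hcards]
      exact (Multiset.eq_of_le_of_card_le h1 h2).symm
    · intro hcs
      constructor
      · have h1 := congrArg Multiset.card hcs
        rw [Multiset.coe_card, code_length, hcards] at h1
        exact h1
      · intro i hi
        have h2 := congrArg (Multiset.count i) hcs
        rw [Multiset.coe_count, code_count, hcount i, if_pos hi] at h2
        exact h2
  have hTG : Nat.card {t : PlaneTree // t.size = n ∧ ∀ i ≤ m, t.degCount i = a i}
      = Nat.card {w : List ℕ // (w : Multiset ℕ) = s ∧ Bal 1 w} := by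
    apply Nat.card_eq_of_bijective
      (fun t => (⟨t.1.code, (key t.1).mp t.2, code_bal t.1⟩ :
        {w : List ℕ // (w : Multiset ℕ) = s ∧ Bal 1 w}))
    constructor
    · intro t t' h
      exact Subtype.ext (code_inj t.1 t'.1 (congrArg Subtype.val h))
    · rintro ⟨w, hw, hb⟩
      obtain ⟨ts, hts1, hts2⟩ := bal_decode w.length 1 w le_rfl hb
      obtain ⟨t, rfl⟩ : ∃ t, ts = [t] := by
        cases ts with
        | nil => simp at hts1
        | cons t ts' =>
          cases ts' with
          | nil => exact ⟨t, rfl⟩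
          | cons u us => simp at hts1
      have hct : t.code = w := by simpa using hts2
      exact ⟨⟨t, (key t).mpr (hct ▸ hw)⟩, Subtype.ext hct⟩
  have hlen : ∀ l : List ℕ, (l : Multiset ℕ) = s → l.length = n := by
    intro l hl
    rw [← Multiset.coe_card, hl, hcards]
  have hAG : Nat.card {l : List ℕ // (l : Multiset ℕ) = s}
      = n * Nat.card {w : List ℕ // (w : Multiset ℕ) = s ∧ Bal 1 w} := by
    have hb : Function.Bijective
        (fun p : Fin n × {w : List ℕ // (w : Multiset ℕ) = s ∧ Bal 1 w} =>
          (⟨p.2.1.rotate p.1,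
              (Multiset.coe_eq_coe.mpr (p.2.1.rotate_perm p.1)).trans p.2.2.1⟩ :
            {l : List ℕ // (l : Multiset ℕ) = s})) := by
      constructor
      · rintro ⟨k, w⟩ ⟨k', w'⟩ h
        have hww : w.1.rotate (k : ℕ) = w'.1.rotate (k' : ℕ) := congrArg Subtype.val h
        have hwl : w.1.length = n := hlen w.1 w.2.1
        have hwl' : w'.1.length = n := hlen w'.1 w'.2.1
        have hkn : (k : ℕ) < n := k.2
        have hk'n : (k' : ℕ) < n := k'.2
        have h1 : w'.1 = w.1.rotate (((k : ℕ) + (n - (k' : ℕ))) % n) := by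
          have e1 : w.1.rotate ((k : ℕ) + (n - (k' : ℕ))) = w'.1 := by
            rw [← List.rotate_rotate, hww, List.rotate_rotate]
            have e2 : (k' : ℕ) + (n - (k' : ℕ)) = n := by omega
            rw [e2, ← hwl', List.rotate_length]
          have e3 := List.rotate_mod w.1 ((k : ℕ) + (n - (k' : ℕ)))
          rw [hwl] at e3
          rw [← e1, e3]
        have hj0 : (((k : ℕ) + (n - (k' : ℕ))) % n) = 0 := by
          refine rotate_bal_unique w.2.2 ?_ ?_
          · rw [hwl]; exact Nat.mod_lt _ (by omega)
          · rw [← h1]; exact w'.2.2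
        have hww' : w'.1 = w.1 := by rw [h1, hj0, List.rotate_zero]
        obtain ⟨q, hq⟩ := Nat.dvd_of_mod_eq_zero hj0
        have hK1 : 1 ≤ (k : ℕ) + (n - (k' : ℕ)) := by omega
        have hK2 : (k : ℕ) + (n - (k' : ℕ)) < 2 * n := by omega
        have hq1 : q = 1 := by
          by_contra hq1
          rcases Nat.lt_or_ge q 1 with hc | hc
          · have hq0 : q = 0 := by omega
            subst hq0
            simp only [Nat.mul_zero] at hq
            omega
          · have hc2 : 2 ≤ q := by omega
            have hmul : n * 2 ≤ n * q := Nat.mul_le_mul_left n hc2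
            omega
        subst hq1
        simp only [Nat.mul_one] at hq
        have hkk' : (k : ℕ) = (k' : ℕ) := by omega
        simp only [Prod.mk.injEq]
        exact ⟨Fin.ext hkk', Subtype.ext hww'.symm⟩
      · rintro ⟨l, hl⟩
        have hll : l.length = n := hlen l hl
        have hsum : l.sum + 1 = l.length := by
          have h1 : (l : Multiset ℕ).sum = n - 1 := by rw [hl, hsums]
          rw [Multiset.sum_coe] at h1
          omega
        obtain ⟨j, hj, hbal⟩ := exists_bal_rotate hsum
        rw [hll] at hj
        refine ⟨⟨⟨(n - j) % n, Nat.mod_lt _ (by omega)⟩,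
          ⟨l.rotate j, by rw [← hl]; exact Multiset.coe_eq_coe.mpr (l.rotate_perm j), hbal⟩⟩, ?_⟩
        apply Subtype.ext
        show (l.rotate j).rotate ((n - j) % n) = l
        have h1 : (l.rotate j).length = n := by rw [List.length_rotate, hll]
        rw [← h1, List.rotate_mod, h1, List.rotate_rotate]
        have h2 : j + (n - j) = n := by omega
        rw [h2, ← hll, List.rotate_length]
    have hcardeq := Nat.card_eq_of_bijective _ hb
    rw [Nat.card_prod, Nat.card_eq_fintype_card (α := Fin n), Fintype.card_fin] at hcardeq
    exact hcardeq.symm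
  have hsub : s.toFinset ⊆ Finset.range (m + 1) := by
    intro x hx
    rw [Multiset.mem_toFinset] at hx
    rw [Finset.mem_range]
    by_contra hxm
    have h1 := hcount x
    rw [if_neg (by omega)] at h1
    have h2 := Multiset.count_pos.mpr hx
    omega
  have hprod : ∏ x ∈ s.toFinset, (s.count x).factorial
      = ∏ i ∈ Finset.range (m + 1), (a i).factorial := by
    have h1 : ∏ x ∈ s.toFinset, (s.count x).factorial
        = ∏ i ∈ Finset.range (m + 1), (s.count i).factorial :=
      Finset.prod_subset hsub (by
        intro x _ hnx
        rw [Multiset.count_eq_zero_of_notMem (by simpa [Multiset.mem_toFinset] using hnx)]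
        rfl)
    rw [h1]
    refine Finset.prod_congr rfl fun i hi => ?_
    rw [Finset.mem_range] at hi
    rw [hcount i, if_pos (by omega)]
  have hA := card_coe_multiset s
  rw [hprod, hcards, ← Nat.card_eq_fintype_card, hAG] at hA
  rw [hTG]
  set N := Nat.card {w : List ℕ // (w : Multiset ℕ) = s ∧ Bal 1 w} with hN
  have hcast : ((n : ℚ) * (N : ℚ)) * ∏ i ∈ Finset.range (m + 1), ((a i).factorial : ℚ)
      = (n.factorial : ℚ) := by
    exact_mod_cast congrArg (Nat.cast : ℕ → ℚ) hA
  have hfact : (0 : ℚ) < ∏ i ∈ Finset.range (m + 1), ((a i).factorial : ℚ) := by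
    apply Finset.prod_pos
    intro i _
    exact_mod_cast (a i).factorial_pos
  have hn' : (n : ℚ) ≠ 0 := Nat.cast_ne_zero.mpr (by omega)
  rw [Nat.cast_prod]
  field_simp
  linarith [hcast]
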